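/- Let a < −1, b > 0 and let θ ∈ (π/2, π) be the principal argument of (a+1) + ib. Then F(t) := t^{a+1} − sin(b·log t + θ)/sin θ is nonnegative for all t ∈ (0,1]. -/

import Mathlib

open Real

lemma key_ineq (b c s : ℝ) (hb : 0 < b) (hc : 0 < c) (hs : 0 ≤ s) :
    c * Real.sin (b * s) + b * Real.cos (b * s) ≤ b * Real.exp (c * s) := by
  rcases le_or_gt (b ^ 2 + c ^ 2) ((b * Real.exp (c * s)) ^ 2) with hA | hB
  · have h1 : (c * Real.sin (b * s) + b * Real.cos (b * s)) ^ 2 ≤ b ^ 2 + c ^ 2 := by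
      nlinarith [Real.sin_sq_add_cos_sq (b * s),
        sq_nonneg (b * Real.sin (b * s) - c * Real.cos (b * s))]
    nlinarith [mul_pos hb (Real.exp_pos (c * s))]
  · have he1 : 1 + c * s ≤ Real.exp (c * s) := by
      have := Real.add_one_le_exp (c * s); linarith
    have hcs : 0 ≤ c * s := by positivity
    have hb2 : b ^ 2 * (1 + c * s) ^ 2 < b ^ 2 + c ^ 2 := by
      have hsq : (1 + c * s) ^ 2 ≤ Real.exp (c * s) ^ 2 :=
        pow_le_pow_left₀ (by positivity) he1 2
      have := mul_le_mul_of_nonneg_left hsq (sq_nonneg b)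
      nlinarith [this]
    have hbs0 : 0 ≤ b * s := by positivity
    have hkey : b ^ 2 * c ^ 2 * s ^ 2 < c ^ 2 := by
      nlinarith [mul_nonneg (mul_nonneg (sq_nonneg b) hc.le) hs]
    have hc2 : (0:ℝ) < c ^ 2 := by positivity
    have hkey1 : b ^ 2 * s ^ 2 < 1 := by nlinarith [hkey, hc2]
    have hbs1 : b * s ≤ 1 := by nlinarith [hkey1, hbs0]
    have hs2 : 2 * b ^ 2 * s ≤ c := by nlinarith [hb2, hc, sq_nonneg (b * c * s)]
    have hsin : Real.sin (b * s) ≤ b * s := Real.sin_le hbs0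
    have habs : |b * s| ≤ 1 := by rwa [abs_of_nonneg hbs0]
    have hcb := Real.cos_bound habs
    have hcos : Real.cos (b * s) ≤ 1 - (b * s) ^ 2 / 2 + (b * s) ^ 4 * (5 / 96) := by
      have h2 := (abs_le.mp hcb).2
      rw [abs_of_nonneg hbs0] at h2
      linarith
    have hexp : (1 + c * s / 2) ^ 2 ≤ Real.exp (c * s) := by
      have h := Real.add_one_le_exp (c * s / 2)
      have h2 : Real.exp (c * s / 2) ^ 2 = Real.exp (c * s) := by
        rw [pow_two, ← Real.exp_add]; ring_nf
      have h3 : (1 + c * s / 2) ^ 2 ≤ Real.exp (c * s / 2) ^ 2 := by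
        apply pow_le_pow_left₀ (by positivity) (by linarith)
      linarith
    have h4 : 4 * b ^ 4 * s ^ 2 ≤ c ^ 2 := by
      nlinarith [mul_self_le_mul_self (by positivity : (0:ℝ) ≤ 2 * b ^ 2 * s) hs2]
    have h5 : 0 ≤ b * s ^ 2 := by positivity
    nlinarith [mul_le_mul_of_nonneg_left h4 h5, sq_nonneg s, mul_pos hb hc]

theorem F_nonneg (a b θ : ℝ) (ha : a < -1) (hb : 0 < b)
    (hθ : θ = Complex.arg (((a + 1 : ℝ) : ℂ) + b * Complex.I)) :
    ∀ t ∈ Set.Ioc (0 : ℝ) 1,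
      0 ≤ t ^ (a + 1) - Real.sin (b * Real.log t + θ) / Real.sin θ := by
  intro t ht
  obtain ⟨ht0, ht1⟩ := ht
  set z : ℂ := ((a + 1 : ℝ) : ℂ) + b * Complex.I with hz
  have hre : z.re = a + 1 := by simp [hz]
  have him : z.im = b := by simp [hz]
  have hzne : z ≠ 0 := by
    intro h
    rw [h] at him
    simp at him
    linarith
  set r := ‖z‖ with hr
  have hrpos : 0 < r := norm_pos_iff.mpr hzne
  have hsinθ : Real.sin θ = b / r := by rw [hθ, Complex.sin_arg, him]
  have hcosθ : Real.cos θ = (a + 1) / r := by rw [hθ, Complex.cos_arg hzne, hre]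
  have hsinpos : 0 < Real.sin θ := by rw [hsinθ]; positivity
  rw [sub_nonneg, div_le_iff₀ hsinpos]
  have hlog : Real.log t ≤ 0 := Real.log_nonpos ht0.le ht1
  set s := -Real.log t with hsdef
  have hs : 0 ≤ s := by simp [hsdef]; linarith
  have hlogt : Real.log t = -s := by simp [hsdef]
  have hts : t ^ (a + 1) = Real.exp (-(a + 1) * s) := by
    rw [Real.rpow_def_of_pos ht0]
    congr 1
    rw [hlogt]; ring
  rw [Real.sin_add, hsinθ, hcosθ, hts, hlogt, mul_neg, Real.sin_neg, Real.cos_neg]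
  have key := key_ineq b (-(a + 1)) s hb (by linarith) hs
  have hfinal : (-(a + 1) * Real.sin (b * s) + b * Real.cos (b * s)) / r ≤
      b * Real.exp (-(a + 1) * s) / r := (div_le_div_iff_of_pos_right hrpos).mpr key
  have e1 : -Real.sin (b * s) * ((a + 1) / r) + Real.cos (b * s) * (b / r) =
      (-(a + 1) * Real.sin (b * s) + b * Real.cos (b * s)) / r := by ring
  have e2 : Real.exp (-(a + 1) * s) * (b / r) = b * Real.exp (-(a + 1) * s) / r := by ring
  rw [e1, e2]
  exact hfinal
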